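/- arXiv:2401.15517 — 2 statements merged into one kernel-verified Lean document; each statement's English description precedes it below -/
import Mathlib

section
/- Let s ≥ 1, n ≥ 1 be integers and let θ ∈ ℂ^s have all entries nonzero and pairwise distinct. (i) If θ_0^n = θ_1^n = … = θ_{s−1}^n = c for some c ∈ ℂ, then û(z) = −c·ũ(z) for every g ∈ ℂ^s, so û and ũ have exactly the same roots whenever they are nonzero. (ii) If the values θ_0^n, …, θ_{s−1}^n are not all equal, then the set of g ∈ ℂ^s for which û and ũ have a common root has Lebesgue measure zero in ℂ^s ≅ ℝ^{2s}; i.e., for almost every g ∈ ℂ^s, the polynomials û and ũ share no common root. -/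
set_option maxHeartbeats 1000000

open Polynomial Finset MeasureTheory

/-- `t_l(z) = ∏_{i ≠ l} (z·θ_i − 1)`. -/
noncomputable def tPoly (s : ℕ) (θ : Fin s → ℂ) (l : Fin s) : Polynomial ℂ :=
  ∏ i ∈ Finset.univ.erase l, (Polynomial.C (θ i) * Polynomial.X - 1)

/-- `û(z) = Σ_l g_l · θ_l^n · t_l(z)`. -/
noncomputable def uHat (s n : ℕ) (θ g : Fin s → ℂ) : Polynomial ℂ :=
  ∑ l : Fin s, Polynomial.C (g l * θ l ^ n) * tPoly s θ l

/-- `ũ(z) = −Σ_l g_l · t_l(z)`. -/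
noncomputable def uTilde (s : ℕ) (θ g : Fin s → ℂ) : Polynomial ℂ :=
  -∑ l : Fin s, Polynomial.C (g l) * tPoly s θ l

lemma mvpoly_continuous {s : ℕ} (P : MvPolynomial (Fin s) ℂ) :
    Continuous fun g : Fin s → ℂ => MvPolynomial.eval g P := by
  continuity

lemma mvpoly_zero_set_null : ∀ (s : ℕ) (P : MvPolynomial (Fin s) ℂ), P ≠ 0 →
    volume {g : Fin s → ℂ | MvPolynomial.eval g P = 0} = 0 := by
  intro s
  induction s with
  | zero =>
    intro P hP
    convert measure_empty (μ := (volume : Measure (Fin 0 → ℂ)))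
    rw [Set.eq_empty_iff_forall_notMem]
    intro g hg
    obtain ⟨c, rfl⟩ := MvPolynomial.C_surjective (Fin 0) P
    simp only [Set.mem_setOf_eq, MvPolynomial.eval_C] at hg
    exact hP (by rw [hg, map_zero])
  | succ m ih =>
    intro P hP
    set Q : Polynomial (MvPolynomial (Fin m) ℂ) := MvPolynomial.finSuccEquiv ℂ m P with hQ
    have hQ0 : Q ≠ 0 := by
      intro h
      apply hP
      have hP' : P = (MvPolynomial.finSuccEquiv ℂ m).symm Q := by
        rw [hQ, AlgEquiv.symm_apply_apply]
      rw [hP', h, map_zero]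
    set c : MvPolynomial (Fin m) ℂ := Q.leadingCoeff with hc
    have hc0 : c ≠ 0 := Polynomial.leadingCoeff_ne_zero.mpr hQ0
    have mp : MeasurePreserving (MeasurableEquiv.piFinSuccAbove (fun _ : Fin (m+1) => ℂ) 0)
        volume ((volume : Measure ℂ).prod (volume : Measure (Fin m → ℂ))) :=
      measurePreserving_piFinSuccAbove (fun _ : Fin (m+1) => (volume : Measure ℂ)) 0
    have hcontA : Continuous fun p : ℂ × (Fin m → ℂ) =>
        MvPolynomial.eval (Fin.cons p.1 p.2) P := by
      apply (mvpoly_continuous P).comp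
      apply continuous_pi
      intro i
      refine Fin.cases ?_ ?_ i
      · exact continuous_fst
      · intro j
        simpa [Function.comp_def] using (continuous_apply j).comp continuous_snd
    set A : Set (ℂ × (Fin m → ℂ)) :=
      {p | MvPolynomial.eval (Fin.cons p.1 p.2) P = 0} with hA
    have hAm : MeasurableSet A := hcontA.measurable (measurableSet_singleton 0)
    have key : volume {g : Fin (m+1) → ℂ | MvPolynomial.eval g P = 0}
        = ((volume : Measure ℂ).prod (volume : Measure (Fin m → ℂ))) A := by
      rw [← mp.measure_preimage hAm.nullMeasurableSet]
      congr 1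
      ext g
      have hg : Fin.cons (g 0) (fun j => g j.succ) = g := Fin.cons_self_tail g
      simp only [Set.mem_preimage, hA, Set.mem_setOf_eq,
        MeasurableEquiv.piFinSuccAbove_apply, Fin.insertNthEquiv,
        Equiv.coe_fn_symm_mk, Fin.removeNth_zero, Fin.zero_succAbove, hg]
      rw [Fin.cons_self_tail]
    rw [key]
    -- split A
    set N : Set (Fin m → ℂ) := {y | MvPolynomial.eval y c = 0} with hN
    have hNnull : volume N = 0 := ih c hc0
    set B : Set (ℂ × (Fin m → ℂ)) :=
      {p | MvPolynomial.eval p.2 c ≠ 0 ∧ MvPolynomial.eval (Fin.cons p.1 p.2) P = 0} with hB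
    have hsub : A ⊆ (Set.univ ×ˢ N) ∪ B := by
      intro p hp
      by_cases h : MvPolynomial.eval p.2 c = 0
      · exact Or.inl ⟨Set.mem_univ _, h⟩
      · exact Or.inr ⟨h, hp⟩
    refine measure_mono_null hsub (measure_union_null ?_ ?_)
    · rw [Measure.prod_prod, hNnull, mul_zero]
    · -- use swap and Fubini
      set B' : Set ((Fin m → ℂ) × ℂ) :=
        {q | MvPolynomial.eval q.1 c ≠ 0 ∧ MvPolynomial.eval (Fin.cons q.2 q.1) P = 0} with hB'
      have hcontB : Continuous fun q : (Fin m → ℂ) × ℂ =>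
          MvPolynomial.eval (Fin.cons q.2 q.1) P := by
        apply (mvpoly_continuous P).comp
        apply continuous_pi
        intro i
        refine Fin.cases ?_ ?_ i
        · exact continuous_snd
        · intro j
          simpa [Function.comp_def] using (continuous_apply j).comp continuous_fst
      have hcontc : Continuous fun q : (Fin m → ℂ) × ℂ => MvPolynomial.eval q.1 c :=
        (mvpoly_continuous c).comp continuous_fst
      have hB'm : MeasurableSet B' := by
        refine MeasurableSet.inter ?_ ?_
        · exact (hcontc.measurable (measurableSet_singleton 0)).compl
        · exact hcontB.measurable (measurableSet_singleton 0)
      have hswap : B = Prod.swap ⁻¹' B' := by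
        ext ⟨a, y⟩
        simp only [hB, hB', Set.mem_preimage, Set.mem_setOf_eq, Prod.swap_prod_mk]
      rw [hswap, Measure.measurePreserving_swap.measure_preimage hB'm.nullMeasurableSet]
      rw [Measure.measure_prod_null hB'm]
      refine Filter.Eventually.of_forall fun y => ?_
      by_cases hy : MvPolynomial.eval y c = 0
      · convert measure_empty (μ := (volume : Measure ℂ))
        rw [Set.eq_empty_iff_forall_notMem]
        intro a ha
        exact ha.1 hy
        rfl
      · have hpy : (Q.map (MvPolynomial.eval y)) ≠ 0 := by
          intro h
          apply hy
          have : (Q.map (MvPolynomial.eval y)).coeff Q.natDegree = 0 := by rw [h]; simp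
          rwa [Polynomial.coeff_map] at this
        refine measure_mono_null ?_
          ((Polynomial.finite_setOf_isRoot hpy).measure_zero volume)
        intro a ha
        have := ha.2
        rw [MvPolynomial.eval_eq_eval_mv_eval'] at this
        exact this

noncomputable def sylMat {R : Type*} [CommRing R] (m n : ℕ) (f g : R[X]) :
    Matrix (Fin (n + m)) (Fin (n + m)) R := fun i j =>
  if (i : ℕ) < n then (f * X ^ (i : ℕ)).coeff j else (g * X ^ ((i : ℕ) - n)).coeff j

lemma sylMat_map {R S : Type*} [CommRing R] [CommRing S] (φ : R →+* S) (m n : ℕ)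
    (f g : R[X]) : (sylMat m n f g).map φ = sylMat m n (f.map φ) (g.map φ) := by
  ext i j
  simp only [Matrix.map_apply, sylMat]
  split_ifs
  · rw [← Polynomial.coeff_map, Polynomial.map_mul, Polynomial.map_pow, Polynomial.map_X]
  · rw [← Polynomial.coeff_map, Polynomial.map_mul, Polynomial.map_pow, Polynomial.map_X]

lemma sylMat_det_eq_zero {m n : ℕ} (hn : 0 < n + m) {f g : ℂ[X]}
    (hf : f.natDegree ≤ m) (hg : g.natDegree ≤ n) {z : ℂ}
    (hfz : f.IsRoot z) (hgz : g.IsRoot z) : (sylMat m n f g).det = 0 := by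
  rw [← Matrix.exists_mulVec_eq_zero_iff]
  refine ⟨fun j => z ^ (j : ℕ), ?_, ?_⟩
  · intro h
    have := congrFun h ⟨0, hn⟩
    simp at this
  · funext i
    simp only [Matrix.mulVec, dotProduct, sylMat, Pi.zero_apply]
    split_ifs with hi
    · have hdeg : (f * X ^ (i : ℕ)).natDegree < n + m := by
        calc (f * X ^ (i : ℕ)).natDegree ≤ f.natDegree + (X ^ (i:ℕ) : ℂ[X]).natDegree :=
              natDegree_mul_le
        _ ≤ m + (i : ℕ) := by rw [natDegree_X_pow]; omega
        _ < n + m := by omega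
      have h2 : ∑ x : Fin (n+m), (f * X ^ (i:ℕ)).coeff ↑x * z ^ (x:ℕ)
          = eval z (f * X ^ (i:ℕ)) := by
        rw [Polynomial.eval_eq_sum_range' hdeg z]
        exact Fin.sum_univ_eq_sum_range (fun j => (f * X ^ (i:ℕ)).coeff j * z ^ j) (n+m)
      rw [h2, eval_mul, hfz.eq_zero, zero_mul]
    · push_neg at hi
      have hdeg : (g * X ^ ((i : ℕ) - n)).natDegree < n + m := by
        calc (g * X ^ ((i:ℕ) - n)).natDegree ≤ g.natDegree + (X ^ ((i:ℕ)-n) : ℂ[X]).natDegree :=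
              natDegree_mul_le
        _ ≤ n + ((i : ℕ) - n) := by rw [natDegree_X_pow]; omega
        _ < n + m := by have := i.isLt; omega
      have h2 : ∑ x : Fin (n+m), (g * X ^ ((i:ℕ)-n)).coeff ↑x * z ^ (x:ℕ)
          = eval z (g * X ^ ((i:ℕ)-n)) := by
        rw [Polynomial.eval_eq_sum_range' hdeg z]
        exact Fin.sum_univ_eq_sum_range (fun j => (g * X ^ ((i:ℕ)-n)).coeff j * z ^ j) (n+m)
      rw [h2, eval_mul, hgz.eq_zero, zero_mul]

lemma coprime_of_no_common_root {f g : ℂ[X]} (hf : f ≠ 0) (hg : g ≠ 0)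
    (hroot : ∀ z : ℂ, f.IsRoot z → ¬ g.IsRoot z) : IsCoprime f g := by
  rw [← EuclideanDomain.gcd_isUnit_iff]
  by_contra hu
  have hd0 : EuclideanDomain.gcd f g ≠ 0 := fun h =>
    hf (EuclideanDomain.gcd_eq_zero_iff.mp h).1
  have hdeg : 0 < (EuclideanDomain.gcd f g).degree := by
    rcases lt_or_eq_of_le (Polynomial.zero_le_degree_iff.mpr hd0) with h | h
    · exact h
    · exact absurd (Polynomial.isUnit_iff_degree_eq_zero.mpr h.symm) hu
  obtain ⟨z, hz⟩ := Complex.exists_root hdeg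
  exact hroot z (hz.dvd (EuclideanDomain.gcd_dvd_left f g))
    (hz.dvd (EuclideanDomain.gcd_dvd_right f g))

lemma sylMat_det_ne_zero {N : ℕ} (hN : 0 < N) {f g : ℂ[X]}
    (hfN : f.natDegree ≤ N) (hgN : g.natDegree ≤ N) (hgtop : g.coeff N ≠ 0)
    (hf0 : f ≠ 0)
    (hroot : ∀ z : ℂ, f.IsRoot z → ¬ g.IsRoot z) :
    (sylMat N N f g).det ≠ 0 := by
  intro hdet
  have hg0 : g ≠ 0 := fun h => hgtop (by rw [h]; simp)
  have hgnat : g.natDegree = N :=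
    le_antisymm hgN (Polynomial.le_natDegree_of_ne_zero hgtop)
  have hgdeg : g.degree = (N : ℕ) := by
    rw [Polynomial.degree_eq_natDegree hg0, hgnat]
  -- get a nonzero kernel vector of the transpose
  have hdetT : (sylMat N N f g).transpose.det = 0 := by rw [Matrix.det_transpose]; exact hdet
  obtain ⟨v, hv0, hv⟩ := Matrix.exists_mulVec_eq_zero_iff.mpr hdetT
  -- build polynomials a, b
  set a : ℂ[X] := ∑ i : Fin N, C (v (Fin.castAdd N i)) * X ^ (i : ℕ) with ha
  set b : ℂ[X] := ∑ i : Fin N, C (v (Fin.natAdd N i)) * X ^ (i : ℕ) with hb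
  have hadeg : a.natDegree ≤ N - 1 :=
    Polynomial.natDegree_sum_le_of_forall_le _ _ fun i _ =>
      (Polynomial.natDegree_C_mul_X_pow_le _ _).trans (by have := i.isLt; omega)
  have hbdeg : b.natDegree ≤ N - 1 :=
    Polynomial.natDegree_sum_le_of_forall_le _ _ fun i _ =>
      (Polynomial.natDegree_C_mul_X_pow_le _ _).trans (by have := i.isLt; omega)
  have key : a * f + b * g = 0 := by
    ext j
    rw [Polynomial.coeff_zero, Polynomial.coeff_add]
    by_cases hj : j < N + N
    · have hvj := congrFun hv ⟨j, hj⟩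
      simp only [Matrix.mulVec, dotProduct, Matrix.transpose_apply, Pi.zero_apply] at hvj
      rw [Fin.sum_univ_add] at hvj
      have e1 : ∀ i : Fin N, sylMat N N f g (Fin.castAdd N i) ⟨j, hj⟩
          = (f * X ^ (i : ℕ)).coeff j := fun i => by
        simp [sylMat, i.isLt]
      have e2 : ∀ i : Fin N, sylMat N N f g (Fin.natAdd N i) ⟨j, hj⟩
          = (g * X ^ (i : ℕ)).coeff j := fun i => by
        simp only [sylMat, Fin.coe_natAdd]
        rw [if_neg (by omega), Nat.add_sub_cancel_left]
      simp only [e1, e2] at hvj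
      have hconv1 : (a * f).coeff j
          = ∑ i : Fin N, (f * X ^ (i : ℕ)).coeff j * v (Fin.castAdd N i) := by
        rw [ha, Finset.sum_mul, Polynomial.finset_sum_coeff]
        refine Finset.sum_congr rfl fun i _ => ?_
        rw [mul_assoc, mul_comm (X ^ (i : ℕ)) f, Polynomial.coeff_C_mul, mul_comm]
      have hconv2 : (b * g).coeff j
          = ∑ i : Fin N, (g * X ^ (i : ℕ)).coeff j * v (Fin.natAdd N i) := by
        rw [hb, Finset.sum_mul, Polynomial.finset_sum_coeff]
        refine Finset.sum_congr rfl fun i _ => ?_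
        rw [mul_assoc, mul_comm (X ^ (i : ℕ)) g, Polynomial.coeff_C_mul, mul_comm]
      rw [hconv1, hconv2]
      exact hvj
    · push_neg at hj
      have h1 : (a * f).coeff j = 0 := by
        apply Polynomial.coeff_eq_zero_of_natDegree_lt
        calc (a * f).natDegree ≤ a.natDegree + f.natDegree := Polynomial.natDegree_mul_le
        _ < N + N := by omega
        _ ≤ j := hj
      have h2 : (b * g).coeff j = 0 := by
        apply Polynomial.coeff_eq_zero_of_natDegree_lt
        calc (b * g).natDegree ≤ b.natDegree + g.natDegree := Polynomial.natDegree_mul_le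
        _ < N + N := by omega
        _ ≤ j := hj
      rw [h1, h2, add_zero]
  have hco : IsCoprime g f := (coprime_of_no_common_root hf0 hg0 hroot).symm
  have hdvd : g ∣ a * f := ⟨-b, by linear_combination key⟩
  have ha0 : a = 0 := by
    refine Polynomial.eq_zero_of_dvd_of_degree_lt (hco.dvd_of_dvd_mul_right hdvd) ?_
    rw [hgdeg]
    refine lt_of_le_of_lt Polynomial.degree_le_natDegree ?_
    exact_mod_cast (by omega : a.natDegree < N)
  have hb0 : b = 0 := by
    have hbg : b * g = 0 := by rw [ha0] at key; simpa using key
    rcases mul_eq_zero.mp hbg with h | h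
    · exact h
    · exact absurd h hg0
  apply hv0
  funext i
  by_cases hi : (i : ℕ) < N
  · have hai : a.coeff (i : ℕ) = v i := by
      rw [ha, Polynomial.finset_sum_coeff]
      rw [Finset.sum_eq_single (⟨(i : ℕ), hi⟩ : Fin N)]
      · rw [Polynomial.coeff_C_mul_X_pow, if_pos rfl]
        congr 1
      · intro k _ hk
        rw [Polynomial.coeff_C_mul_X_pow, if_neg (fun h => hk (Fin.ext (by simp [h])))]
      · intro h
        exact absurd (Finset.mem_univ _) h
    rw [ha0] at hai
    simpa using hai.symm
  · push_neg at hi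
    have hiN : (i : ℕ) - N < N := by have := i.isLt; omega
    have hbi : b.coeff ((i : ℕ) - N) = v i := by
      rw [hb, Polynomial.finset_sum_coeff]
      rw [Finset.sum_eq_single (⟨(i : ℕ) - N, hiN⟩ : Fin N)]
      · rw [Polynomial.coeff_C_mul_X_pow, if_pos rfl]
        congr 1
        exact Fin.ext (by simp; omega)
      · intro k _ hk
        rw [Polynomial.coeff_C_mul_X_pow, if_neg (fun h => hk (Fin.ext (by simp [h])))]
      · intro h
        exact absurd (Finset.mem_univ _) h
    rw [hb0] at hbi
    simpa using hbi.symm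

section tfacts
variable {s : ℕ} {θ : Fin s → ℂ}

lemma linear_rw (a : ℂ) : (C a * X - 1 : ℂ[X]) = C a * X + C (-1) := by
  rw [map_neg, map_one]; ring

lemma tPoly_natDegree_le (l : Fin s) : (tPoly s θ l).natDegree ≤ s - 1 := by
  refine le_trans (Polynomial.natDegree_prod_le _ _) ?_
  have : ∀ i ∈ Finset.univ.erase l, (C (θ i) * X - 1 : ℂ[X]).natDegree ≤ 1 := by
    intro i _
    rw [linear_rw]
    exact Polynomial.natDegree_linear_le
  refine le_trans (Finset.sum_le_sum this) ?_
  rw [Finset.sum_const, smul_eq_mul, mul_one]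
  simp [Finset.card_erase_of_mem]

lemma uHat_natDegree_le (n : ℕ) (g : Fin s → ℂ) : (uHat s n θ g).natDegree ≤ s - 1 := by
  refine Polynomial.natDegree_sum_le_of_forall_le _ _ fun l _ => ?_
  exact le_trans (Polynomial.natDegree_C_mul_le _ _) (tPoly_natDegree_le l)

lemma uTilde_natDegree_le (g : Fin s → ℂ) : (uTilde s θ g).natDegree ≤ s - 1 := by
  rw [uTilde, natDegree_neg]
  refine Polynomial.natDegree_sum_le_of_forall_le _ _ fun l _ => ?_
  exact le_trans (Polynomial.natDegree_C_mul_le _ _) (tPoly_natDegree_le l)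

lemma tPoly_coeff_top (hθ0 : ∀ l, θ l ≠ 0) (l : Fin s) :
    (tPoly s θ l).coeff (s - 1) = ∏ i ∈ Finset.univ.erase l, θ i := by
  have h1 : ∀ i ∈ Finset.univ.erase l, (C (θ i) * X - 1 : ℂ[X]) ≠ 0 := by
    intro i _
    rw [linear_rw]
    intro h
    have := Polynomial.natDegree_linear (hθ0 i) (b := (-1 : ℂ))
    rw [h] at this
    simp at this
  have hnd : (tPoly s θ l).natDegree = s - 1 := by
    rw [tPoly, Polynomial.natDegree_prod _ _ h1]
    have : ∀ i ∈ Finset.univ.erase l, (C (θ i) * X - 1 : ℂ[X]).natDegree = 1 := by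
      intro i _
      rw [linear_rw]
      exact Polynomial.natDegree_linear (hθ0 i)
    rw [Finset.sum_congr rfl this, Finset.sum_const, smul_eq_mul, mul_one]
    simp [Finset.card_erase_of_mem]
  have hlc : (tPoly s θ l).leadingCoeff = ∏ i ∈ Finset.univ.erase l, θ i := by
    rw [tPoly, Polynomial.leadingCoeff_prod]
    refine Finset.prod_congr rfl fun i _ => ?_
    rw [linear_rw, Polynomial.leadingCoeff_linear (hθ0 i)]
  rw [← hnd, ← hlc]
  rfl

lemma tPoly_eval_self (hθ0 : ∀ l, θ l ≠ 0) (hθinj : Function.Injective θ) (l : Fin s) : (tPoly s θ l).eval (θ l)⁻¹ ≠ 0 := by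
  rw [tPoly, Polynomial.eval_prod]
  rw [Finset.prod_ne_zero_iff]
  intro i hi
  simp only [eval_sub, eval_mul, eval_C, eval_X, eval_one]
  intro h
  have h2 : θ i * (θ l)⁻¹ = 1 := by
    have := sub_eq_zero.mp h
    simpa using this
  rw [← div_eq_mul_inv, div_eq_one_iff_eq (hθ0 l)] at h2
  exact (Finset.mem_erase.mp hi).1 (hθinj h2)

lemma tPoly_eval_other (hθ0 : ∀ l, θ l ≠ 0) {l m : Fin s} (h : l ≠ m) : (tPoly s θ m).eval (θ l)⁻¹ = 0 := by
  rw [tPoly, Polynomial.eval_prod]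
  refine Finset.prod_eq_zero (Finset.mem_erase.mpr ⟨h, Finset.mem_univ l⟩) ?_
  simp only [eval_sub, eval_mul, eval_C, eval_X, eval_one]
  rw [mul_inv_cancel₀ (hθ0 l), sub_self]

end tfacts

noncomputable def uHatMv (s n : ℕ) (θ : Fin s → ℂ) : Polynomial (MvPolynomial (Fin s) ℂ) :=
  ∑ l : Fin s, Polynomial.C (MvPolynomial.X l * MvPolynomial.C (θ l ^ n)) *
    (tPoly s θ l).map (MvPolynomial.C : ℂ →+* MvPolynomial (Fin s) ℂ)

noncomputable def uTildeMv (s : ℕ) (θ : Fin s → ℂ) : Polynomial (MvPolynomial (Fin s) ℂ) :=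
  -∑ l : Fin s, Polynomial.C (MvPolynomial.X l) *
    (tPoly s θ l).map (MvPolynomial.C : ℂ →+* MvPolynomial (Fin s) ℂ)

lemma map_C_comp_eval (s : ℕ) (g : Fin s → ℂ) :
    (MvPolynomial.eval g).comp (MvPolynomial.C : ℂ →+* MvPolynomial (Fin s) ℂ)
      = RingHom.id ℂ :=
  RingHom.ext fun c => MvPolynomial.eval_C _

lemma uHatMv_map (s n : ℕ) (θ : Fin s → ℂ) (g : Fin s → ℂ) :
    (uHatMv s n θ).map (MvPolynomial.eval g) = uHat s n θ g := by
  rw [uHatMv, uHat]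
  rw [Polynomial.map_sum]
  refine Finset.sum_congr rfl fun l _ => ?_
  rw [Polynomial.map_mul, Polynomial.map_C, Polynomial.map_map, map_C_comp_eval,
    Polynomial.map_id]
  congr 1
  simp [mul_comm]

lemma uTildeMv_map (s : ℕ) (θ : Fin s → ℂ) (g : Fin s → ℂ) (n : ℕ) :
    (uTildeMv s θ).map (MvPolynomial.eval g) = uTilde s θ g := by
  rw [uTildeMv, uTilde, Polynomial.map_neg, Polynomial.map_sum]
  congr 1
  refine Finset.sum_congr rfl fun l _ => ?_
  rw [Polynomial.map_mul, Polynomial.map_C, Polynomial.map_map, map_C_comp_eval,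
    Polynomial.map_id]
  congr 1
  simp

noncomputable def sylP (s n : ℕ) (θ : Fin s → ℂ) : MvPolynomial (Fin s) ℂ :=
  (sylMat (s - 1) (s - 1) (uHatMv s n θ) (uTildeMv s θ)).det

lemma sylP_eval (s n : ℕ) (θ : Fin s → ℂ) (g : Fin s → ℂ) :
    MvPolynomial.eval g (sylP s n θ)
      = (sylMat (s - 1) (s - 1) (uHat s n θ g) (uTilde s θ g)).det := by
  rw [sylP, RingHom.map_det, RingHom.mapMatrix_apply, sylMat_map, uHatMv_map, uTildeMv_map s θ g n]

lemma exists_good_g {s n : ℕ} {θ : Fin s → ℂ} (hs2 : 2 ≤ s) (hθ0 : ∀ l, θ l ≠ 0)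
    (hθinj : Function.Injective θ) {k k' : Fin s} (hkk' : k ≠ k')
    (hab : θ k ^ n ≠ θ k' ^ n) :
    ∃ g : Fin s → ℂ, (uTilde s θ g).coeff (s - 1) ≠ 0 ∧ uHat s n θ g ≠ 0 ∧
      ∀ z : ℂ, ¬((uHat s n θ g).IsRoot z ∧ (uTilde s θ g).IsRoot z) := by
  classical
  set tv : Fin s → ℂ := fun l => (tPoly s θ l).eval (θ l)⁻¹ with htvdef
  have htv : ∀ l, tv l ≠ 0 := fun l => tPoly_eval_self hθ0 hθinj l
  set U0 : ℂ[X] := ∑ l : Fin s, C (-(θ l ^ n) / tv l) * tPoly s θ l with hU0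
  set q' : ℂ[X] := U0 + C (θ k ^ n) with hq'def
  have hU0k' : U0.eval (θ k')⁻¹ = -(θ k' ^ n) := by
    rw [hU0, Polynomial.eval_finset_sum]
    rw [Finset.sum_eq_single k']
    · rw [eval_mul, eval_C]
      have hev : eval (θ k')⁻¹ (tPoly s θ k') = tv k' := rfl
      rw [hev, div_mul_cancel₀ _ (htv k')]
    · intro l _ hl
      rw [eval_mul, tPoly_eval_other hθ0 (Ne.symm hl), mul_zero]
    · intro h; exact absurd (Finset.mem_univ _) h
  have hq' : q' ≠ 0 := by
    intro h
    have he : q'.eval (θ k')⁻¹ = 0 := by rw [h]; simp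
    rw [hq'def, eval_add, eval_C, hU0k'] at he
    exact hab (by linear_combination he)
  set bad : Finset ℂ :=
    insert 0 (q'.roots.toFinset.image fun z => -(tv k) / (tPoly s θ k).eval z) with hbad
  obtain ⟨ε, hε⟩ := Infinite.exists_notMem_finset bad
  have hε0 : ε ≠ 0 := fun h => hε (by rw [h, hbad]; exact Finset.mem_insert_self _ _)
  set g : Fin s → ℂ := fun l => -(1 + if l = k then ε else 0) / tv l with hgdef
  -- representation of uTilde
  have hUT : uTilde s θ g = 1 + C (ε / tv k) * tPoly s θ k := by
    have hdiff : uTilde s θ g - (1 + C (ε / tv k) * tPoly s θ k) = 0 := by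
      apply Polynomial.eq_zero_of_natDegree_lt_card_of_eval_eq_zero _
        (f := fun m : Fin s => (θ m)⁻¹)
        (fun m m' h => hθinj (inv_injective h))
      · intro m
        rw [eval_sub, eval_add, eval_mul, eval_C, eval_one]
        have h1 : (uTilde s θ g).eval (θ m)⁻¹ = 1 + (if m = k then ε else 0) := by
          rw [uTilde, eval_neg, Polynomial.eval_finset_sum]
          rw [Finset.sum_eq_single m]
          · rw [eval_mul, eval_C]
            have hev : eval (θ m)⁻¹ (tPoly s θ m) = tv m := rfl
            have hg : g m = -(1 + if m = k then ε else 0) / tv m := rfl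
            rw [hev, hg, div_mul_cancel₀ _ (htv m), neg_neg]
          · intro l _ hl
            rw [eval_mul, tPoly_eval_other hθ0 (Ne.symm hl), mul_zero]
          · intro h; exact absurd (Finset.mem_univ _) h
        rw [h1]
        by_cases hm : m = k
        · subst hm
          have hev : eval (θ m)⁻¹ (tPoly s θ m) = tv m := rfl
          rw [if_pos rfl, hev, div_mul_cancel₀ _ (htv m)]
          ring
        · rw [if_neg hm, tPoly_eval_other hθ0 hm, mul_zero]
          ring
      · rw [Fintype.card_fin]
        have h2 : (1 + C (ε / tv k) * tPoly s θ k).natDegree ≤ s - 1 := by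
          refine le_trans (Polynomial.natDegree_add_le _ _) ?_
          rw [max_le_iff]
          exact ⟨by simp, le_trans (Polynomial.natDegree_C_mul_le _ _) (tPoly_natDegree_le k)⟩
        refine lt_of_le_of_lt (le_trans (Polynomial.natDegree_sub_le _ _) ?_) (show s - 1 < s by omega)
        rw [max_le_iff]
        exact ⟨uTilde_natDegree_le g, h2⟩
    have := sub_eq_zero.mp hdiff
    exact this
  -- representation of uHat
  have hUH : uHat s n θ g = U0 - C (ε * θ k ^ n / tv k) * tPoly s θ k := by
    have hterm : ∀ l : Fin s, C (g l * θ l ^ n) * tPoly s θ l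
        = C (-(θ l ^ n) / tv l) * tPoly s θ l
          - C (if l = k then ε * θ k ^ n / tv k else 0) * tPoly s θ l := by
      intro l
      rw [← sub_mul, ← map_sub]
      congr 2
      have hg : g l = -(1 + if l = k then ε else 0) / tv l := rfl
      by_cases h : l = k
      · subst h
        rw [hg, if_pos rfl, if_pos rfl]
        field_simp [htv l]
        ring
      · rw [hg, if_neg h, if_neg h, sub_zero]
        field_simp
        ring
    calc uHat s n θ g = ∑ l : Fin s, (C (-(θ l ^ n) / tv l) * tPoly s θ l
          - C (if l = k then ε * θ k ^ n / tv k else 0) * tPoly s θ l) :=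
        Finset.sum_congr rfl fun l _ => hterm l
      _ = U0 - C (ε * θ k ^ n / tv k) * tPoly s θ k := by
        rw [Finset.sum_sub_distrib, hU0]
        congr 1
        rw [Finset.sum_eq_single k]
        · rw [if_pos rfl]
        · intro l _ hl
          rw [if_neg hl, map_zero, zero_mul]
        · intro h; exact absurd (Finset.mem_univ _) h
  -- top coefficient of uTilde is nonzero
  have hcoeff : (uTilde s θ g).coeff (s - 1) ≠ 0 := by
    rw [hUT, Polynomial.coeff_add, Polynomial.coeff_one, if_neg (by omega : ¬(s - 1 = 0)),
      Polynomial.coeff_C_mul, tPoly_coeff_top hθ0 k, zero_add]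
    exact mul_ne_zero (div_ne_zero hε0 (htv k))
      (Finset.prod_ne_zero_iff.mpr fun i _ => hθ0 i)
  -- no common roots
  have hroot : ∀ z : ℂ, ¬((uHat s n θ g).IsRoot z ∧ (uTilde s θ g).IsRoot z) := by
    rintro z ⟨h1, h2⟩
    rw [Polynomial.IsRoot, hUT, eval_add, eval_one, eval_mul, eval_C] at h2
    have htkz : (tPoly s θ k).eval z ≠ 0 := by
      intro h0
      rw [h0, mul_zero, add_zero] at h2
      exact one_ne_zero h2
    have hεt : ε * (tPoly s θ k).eval z = -(tv k) := by
      have h2' := h2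
      field_simp [htv k] at h2'
      linear_combination h2'
    have hεeq : ε = -(tv k) / (tPoly s θ k).eval z := by
      rw [eq_div_iff htkz]
      exact hεt
    have hq'z : q'.IsRoot z := by
      rw [Polynomial.IsRoot, hq'def, eval_add, eval_C]
      rw [Polynomial.IsRoot, hUH, eval_sub, eval_mul, eval_C] at h1
      have h4 : ε * θ k ^ n / tv k * (tPoly s θ k).eval z = -(θ k ^ n) := by
        have h3 : ε / tv k * (tPoly s θ k).eval z = -1 := by
          rw [div_mul_eq_mul_div, hεt, neg_div, div_self (htv k)]
        calc ε * θ k ^ n / tv k * (tPoly s θ k).eval z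
            = θ k ^ n * (ε / tv k * (tPoly s θ k).eval z) := by ring
          _ = -(θ k ^ n) := by rw [h3]; ring
      linear_combination h1 + h4
    apply hε
    rw [hbad]
    refine Finset.mem_insert_of_mem (Finset.mem_image.mpr ⟨z, ?_, hεeq.symm⟩)
    rw [Multiset.mem_toFinset]
    exact (Polynomial.mem_roots hq').mpr hq'z
  -- uHat is nonzero
  have hf0 : uHat s n θ g ≠ 0 := by
    intro h0
    have hne : uTilde s θ g ≠ 0 := fun h => hcoeff (by rw [h]; simp)
    have hdeg : 0 < (uTilde s θ g).degree := by
      have h1 : 1 ≤ (uTilde s θ g).natDegree :=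
        le_trans (by omega) (Polynomial.le_natDegree_of_ne_zero hcoeff)
      rw [Polynomial.degree_eq_natDegree hne]
      exact_mod_cast h1
    obtain ⟨z, hz⟩ := Complex.exists_root hdeg
    exact hroot z ⟨by rw [Polynomial.IsRoot, h0, eval_zero], hz⟩
  exact ⟨g, hcoeff, hf0, hroot⟩

/-- (i) if `θ_l^n = c` for all `l`, then `û = −c·ũ` for every `g`, so `û` and `ũ`
have exactly the same roots whenever they are nonzero; (ii) if the `θ_l^n` are not all equal,
then the set of `g ∈ ℂ^s` for which `û` and `ũ` have a common root has Lebesgue measure zero. -/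
theorem uHat_uTilde_common_roots (s n : ℕ) (hs : 1 ≤ s) (hn : 1 ≤ n) (θ : Fin s → ℂ)
    (hθ0 : ∀ l, θ l ≠ 0) (hθinj : Function.Injective θ) :
    ((∀ c : ℂ, (∀ l, θ l ^ n = c) →
        ∀ g : Fin s → ℂ,
          uHat s n θ g = Polynomial.C (-c) * uTilde s θ g ∧
          (uHat s n θ g ≠ 0 → (uHat s n θ g).roots = (uTilde s θ g).roots)) ∧
     ((∃ k k' : Fin s, θ k ^ n ≠ θ k' ^ n) →
        volume {g : Fin s → ℂ |
          ∃ z : ℂ, (uHat s n θ g).IsRoot z ∧ (uTilde s θ g).IsRoot z} = 0)) := by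
  constructor
  · intro c hc g
    have hceq : uHat s n θ g = Polynomial.C (-c) * uTilde s θ g := by
      have h1 : Polynomial.C (-c) * uTilde s θ g
          = ∑ l : Fin s, Polynomial.C (g l * c) * tPoly s θ l := by
        rw [uTilde, map_neg, neg_mul_neg, Finset.mul_sum]
        refine Finset.sum_congr rfl fun l _ => ?_
        rw [← mul_assoc, ← map_mul, mul_comm c (g l)]
      have h2 : uHat s n θ g = ∑ l : Fin s, Polynomial.C (g l * c) * tPoly s θ l := by
        rw [uHat]
        exact Finset.sum_congr rfl fun l _ => by rw [hc l]
      rw [h1, h2]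
    refine ⟨hceq, fun hne => ?_⟩
    have hc0 : c ≠ 0 := by
      intro h
      apply hθ0 ⟨0, hs⟩
      have := hc ⟨0, hs⟩
      rw [h] at this
      exact pow_eq_zero_iff (by omega) |>.mp this
    rw [hceq, Polynomial.roots_C_mul _ (neg_ne_zero.mpr hc0)]
  · rintro ⟨k, k', hkk'⟩
    have hks : k ≠ k' := fun h => hkk' (by rw [h])
    have hs2 : 2 ≤ s := by
      by_contra h
      have h1 : s = 1 := by omega
      subst h1
      exact hks (Subsingleton.elim k k')
    obtain ⟨g0, hcoeff, hf0, hnoroot⟩ := exists_good_g hs2 hθ0 hθinj hks hkk'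
    have hPne : sylP s n θ ≠ 0 := by
      intro h
      have heval := sylP_eval s n θ g0
      rw [h, map_zero] at heval
      exact sylMat_det_ne_zero (N := s - 1) (by omega) (uHat_natDegree_le n g0)
        (uTilde_natDegree_le g0) hcoeff hf0
        (fun z hz1 hz2 => hnoroot z ⟨hz1, hz2⟩) heval.symm
    refine measure_mono_null ?_ (mvpoly_zero_set_null s (sylP s n θ) hPne)
    rintro g ⟨z, hz1, hz2⟩
    show MvPolynomial.eval g (sylP s n θ) = 0
    rw [sylP_eval]
    exact sylMat_det_eq_zero (by omega : 0 < (s - 1) + (s - 1))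
      (uHat_natDegree_le n g) (uTilde_natDegree_le g) hz1 hz2
end

section
/- Let s ≥ 1, n ≥ 2s, γ ∈ ℝ. Let g⁺ ∈ ℂ^s have all entries nonzero, let θ⁺ ∈ ℂ^s have nonzero pairwise-distinct entries with (θ⁺_k)^n ≠ e^{−iγ} for all k. Let z_0,…,z_{2s−1} ∈ ℂ be pairwise distinct with z_j^n = e^{iγ}, and let z_{2s},…,z_{3s−1} ∈ ℂ be pairwise distinct with z_j^n ≠ e^{iγ} and v⁺(z_j) ≠ 0 for 2s ≤ j ≤ 3s−1. Set y_j = u⁺(z_j)/v⁺(z_j). If polynomials v, û, ũ ∈ ℂ[z] with deg v ≤ s, deg û ≤ s−1, deg ũ ≤ s−1 satisfy y_j·v(z_j) − z_j^n·û(z_j) − ũ(z_j) = 0 for all 0 ≤ j ≤ 3s−1, then there exists c ∈ ℂ such that v = c·v⁺, û = c·û⁺ and ũ = c·ũ⁺ identically. -/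
open Polynomial Finset Complex

/-- `v(z) = ∏_l (z·θ_l − 1)`. -/
noncomputable def vPoly (s : ℕ) (θ : Fin s → ℂ) : Polynomial ℂ :=
  ∏ l : Fin s, (Polynomial.C (θ l) * Polynomial.X - 1)

/-- `u(z) = z^n·û(z) + ũ(z)`. -/
noncomputable def uPoly (s n : ℕ) (θ g : Fin s → ℂ) : Polynomial ℂ :=
  Polynomial.X ^ n * uHat s n θ g + uTilde s θ g

private lemma natDegree_tPoly_le (s : ℕ) (θ : Fin s → ℂ) (l : Fin s) :
    (tPoly s θ l).natDegree ≤ s - 1 := by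
  refine (Polynomial.natDegree_prod_le _ _).trans ?_
  calc ∑ i ∈ Finset.univ.erase l, (Polynomial.C (θ i) * Polynomial.X - 1).natDegree
      ≤ ∑ _i ∈ Finset.univ.erase l, 1 := by
        refine Finset.sum_le_sum fun i _ => ?_
        compute_degree
    _ = s - 1 := by
        simp [Finset.card_erase_of_mem]

private lemma natDegree_uHat_le (s n : ℕ) (θ g : Fin s → ℂ) :
    (uHat s n θ g).natDegree ≤ s - 1 := by
  refine Polynomial.natDegree_sum_le_of_forall_le _ _ fun i _ => ?_
  exact (Polynomial.natDegree_C_mul_le _ _).trans (natDegree_tPoly_le s θ i)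

private lemma natDegree_uTilde_le (s : ℕ) (θ g : Fin s → ℂ) :
    (uTilde s θ g).natDegree ≤ s - 1 := by
  rw [uTilde, Polynomial.natDegree_neg]
  refine Polynomial.natDegree_sum_le_of_forall_le _ _ fun i _ => ?_
  exact (Polynomial.natDegree_C_mul_le _ _).trans (natDegree_tPoly_le s θ i)

/-- Theorem `thm:almost_gen_samples`: with `2s` pairwise distinct
shifted-harmonic samples plus `s` further pairwise distinct samples with `z_j^n ≠ e^{iγ}`
and `v⁺(z_j) ≠ 0`, any `v, û, ũ` of degrees `≤ s, ≤ s−1, ≤ s−1` satisfying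
`y_j v(z_j) − z_j^n û(z_j) − ũ(z_j) = 0` for all `j` must equal `c·v⁺, c·û⁺, c·ũ⁺`. -/
theorem three_s_samples_recovery (s n : ℕ) (hs : 1 ≤ s) (hn : 2 * s ≤ n) (γ : ℝ)
    (gp θp : Fin s → ℂ)
    (hgp : ∀ l, gp l ≠ 0)
    (hθ0 : ∀ l, θp l ≠ 0) (hθinj : Function.Injective θp)
    (hθn : ∀ k, θp k ^ n ≠ Complex.exp (-(γ : ℂ) * Complex.I))
    (z : Fin (3 * s) → ℂ)
    (hzinj1 : ∀ j j' : Fin (3 * s), (j : ℕ) < 2 * s → (j' : ℕ) < 2 * s →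
      z j = z j' → j = j')
    (hzn1 : ∀ j : Fin (3 * s), (j : ℕ) < 2 * s →
      z j ^ n = Complex.exp ((γ : ℂ) * Complex.I))
    (hzinj2 : ∀ j j' : Fin (3 * s), 2 * s ≤ (j : ℕ) → 2 * s ≤ (j' : ℕ) →
      z j = z j' → j = j')
    (hzn2 : ∀ j : Fin (3 * s), 2 * s ≤ (j : ℕ) →
      z j ^ n ≠ Complex.exp ((γ : ℂ) * Complex.I))
    (hvz2 : ∀ j : Fin (3 * s), 2 * s ≤ (j : ℕ) → (vPoly s θp).eval (z j) ≠ 0)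
    (y : Fin (3 * s) → ℂ)
    (hy : ∀ j, y j = (uPoly s n θp gp).eval (z j) / (vPoly s θp).eval (z j))
    (v uh ut : Polynomial ℂ)
    (hv : v.degree ≤ (s : ℕ)) (huh : uh.degree ≤ ((s - 1 : ℕ) : ℕ))
    (hut : ut.degree ≤ ((s - 1 : ℕ) : ℕ))
    (heq : ∀ j, y j * v.eval (z j) - (z j) ^ n * uh.eval (z j) - ut.eval (z j) = 0) :
    ∃ c : ℂ, v = Polynomial.C c * vPoly s θp ∧
      uh = Polynomial.C c * uHat s n θp gp ∧
      ut = Polynomial.C c * uTilde s θp gp := by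
  classical
  set e : ℂ := Complex.exp ((γ : ℂ) * Complex.I) with he
  have he0 : e ≠ 0 := Complex.exp_ne_zero _
  -- restate the non-resonance hypothesis
  have hθe : ∀ k, e * θp k ^ n ≠ 1 := by
    intro k hk
    apply hθn k
    have : θp k ^ n = e⁻¹ := eq_inv_of_mul_eq_one_right hk
    rw [this, he, neg_mul, ← Complex.exp_neg]
  set vp : Polynomial ℂ := vPoly s θp with hvp
  set whp : Polynomial ℂ := Polynomial.C e * uHat s n θp gp + uTilde s θp gp with hwhp
  set w : Polynomial ℂ := Polynomial.C e * uh + ut with hwdef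
  -- roots of vp
  set r : Fin s → ℂ := fun l => (θp l)⁻¹ with hr
  have hrinj : Function.Injective r := fun a b hab => by
    apply hθinj
    have := congrArg (·⁻¹) hab
    simpa [hr] using this
  have hvp_r : ∀ l, vp.eval (r l) = 0 := by
    intro l
    rw [hvp, vPoly, Polynomial.eval_prod]
    refine Finset.prod_eq_zero (Finset.mem_univ l) ?_
    simp [hr, hθ0 l]
  -- tPoly evaluations at the roots
  have ht_ne : ∀ l, (tPoly s θp l).eval (r l) ≠ 0 := by
    intro l
    rw [tPoly, Polynomial.eval_prod]
    refine Finset.prod_ne_zero_iff.mpr fun i hi => ?_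
    have hil : i ≠ l := Finset.ne_of_mem_erase hi
    simp only [Polynomial.eval_sub, Polynomial.eval_mul, Polynomial.eval_C,
      Polynomial.eval_X, Polynomial.eval_one]
    intro hcon
    have : θp i * r l = 1 := by linear_combination hcon
    have : θp i = θp l := by
      have h' : θp i * (θp l)⁻¹ = 1 := this
      exact (mul_inv_eq_one₀ (hθ0 l)).mp h'
    exact hil (hθinj this)
  have ht_zero : ∀ i l : Fin s, i ≠ l → (tPoly s θp i).eval (r l) = 0 := by
    intro i l hil
    rw [tPoly, Polynomial.eval_prod]
    refine Finset.prod_eq_zero (Finset.mem_erase.mpr ⟨hil.symm, Finset.mem_univ _⟩) ?_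
    simp [hr, hθ0 l]
  -- whp at the roots
  have hwhp_r : ∀ l, whp.eval (r l) = gp l * (e * θp l ^ n - 1) * (tPoly s θp l).eval (r l) := by
    intro l
    have hH : (uHat s n θp gp).eval (r l) = gp l * θp l ^ n * (tPoly s θp l).eval (r l) := by
      rw [uHat, Polynomial.eval_finset_sum]
      rw [Finset.sum_eq_single l ?_ ?_]
      · simp
      · intro i _ hil
        simp [ht_zero i l hil]
      · intro h
        exact absurd (Finset.mem_univ l) h
    have hT : (uTilde s θp gp).eval (r l) = -(gp l * (tPoly s θp l).eval (r l)) := by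
      rw [uTilde, Polynomial.eval_neg, Polynomial.eval_finset_sum]
      rw [Finset.sum_eq_single l ?_ ?_]
      · simp
      · intro i _ hil
        simp [ht_zero i l hil]
      · intro h
        exact absurd (Finset.mem_univ l) h
    rw [hwhp, Polynomial.eval_add, Polynomial.eval_mul, Polynomial.eval_C, hH, hT]
    ring
  have hwhp_r_ne : ∀ l, whp.eval (r l) ≠ 0 := by
    intro l
    rw [hwhp_r l]
    exact mul_ne_zero (mul_ne_zero (hgp l) (sub_ne_zero.mpr (hθe l))) (ht_ne l)
  -- vp is nonzero, degree s, leading coefficient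
  have hfac_deg : ∀ l : Fin s, (Polynomial.C (θp l) * Polynomial.X - 1 : Polynomial ℂ).degree = 1 := by
    intro l
    have : (Polynomial.C (θp l) * Polynomial.X - 1 : Polynomial ℂ)
        = Polynomial.C (θp l) * Polynomial.X + Polynomial.C (-1) := by
      simp [sub_eq_add_neg]
    rw [this]
    exact Polynomial.degree_linear (hθ0 l)
  have hvp_deg : vp.degree = (s : ℕ) := by
    rw [hvp, vPoly, Polynomial.degree_prod]
    simp [hfac_deg]
  have hvp_ne : vp ≠ 0 := by
    intro h
    rw [h] at hvp_deg
    simp at hvp_deg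
  have hvp_natdeg : vp.natDegree = s := Polynomial.natDegree_eq_of_degree_eq_some hvp_deg
  have hprod_ne : (∏ l, θp l) ≠ 0 := Finset.prod_ne_zero_iff.mpr fun l _ => hθ0 l
  have hvp_coeff : vp.coeff s = ∏ l, θp l := by
    have h1 : vp.leadingCoeff = ∏ l, θp l := by
      rw [hvp, vPoly, Polynomial.leadingCoeff_prod]
      refine Finset.prod_congr rfl fun l _ => ?_
      have : (Polynomial.C (θp l) * Polynomial.X - 1 : Polynomial ℂ)
          = Polynomial.C (θp l) * Polynomial.X + Polynomial.C (-1) := by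
        simp [sub_eq_add_neg]
      rw [this]
      exact Polynomial.leadingCoeff_linear (hθ0 l)
    calc vp.coeff s = vp.coeff vp.natDegree := by rw [hvp_natdeg]
      _ = vp.leadingCoeff := Polynomial.coeff_natDegree
      _ = ∏ l, θp l := h1
  -- degree bounds in natDegree form
  have hv_nd : v.natDegree ≤ s := Polynomial.natDegree_le_iff_degree_le.mpr hv
  have huh_nd : uh.natDegree ≤ s - 1 := Polynomial.natDegree_le_iff_degree_le.mpr huh
  have hut_nd : ut.natDegree ≤ s - 1 := Polynomial.natDegree_le_iff_degree_le.mpr hut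
  have hw_nd : w.natDegree ≤ s - 1 := by
    rw [hwdef]
    refine (Polynomial.natDegree_add_le _ _).trans ?_
    exact max_le ((Polynomial.natDegree_C_mul_le _ _).trans huh_nd) hut_nd
  have hwhp_nd : whp.natDegree ≤ s - 1 := by
    rw [hwhp]
    refine (Polynomial.natDegree_add_le _ _).trans ?_
    exact max_le ((Polynomial.natDegree_C_mul_le _ _).trans (natDegree_uHat_le s n θp gp))
      (natDegree_uTilde_le s θp gp)
  -- v⁺ does not vanish on the first 2s points
  have hvpz1 : ∀ j : Fin (3 * s), (j : ℕ) < 2 * s → vp.eval (z j) ≠ 0 := by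
    intro j hj hcon
    rw [hvp, vPoly, Polynomial.eval_prod] at hcon
    obtain ⟨l, -, hl⟩ := Finset.prod_eq_zero_iff.mp hcon
    simp only [Polynomial.eval_sub, Polynomial.eval_mul, Polynomial.eval_C,
      Polynomial.eval_X, Polynomial.eval_one] at hl
    have h1 : θp l * z j = 1 := by linear_combination hl
    have h2 : θp l ^ n * z j ^ n = 1 := by
      rw [← mul_pow, h1, one_pow]
    rw [hzn1 j hj] at h2
    exact hθe l (by linear_combination h2)
  -- the evaluation of u⁺
  have hup_eval : ∀ x : ℂ, (uPoly s n θp gp).eval x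
      = x ^ n * (uHat s n θp gp).eval x + (uTilde s θp gp).eval x := by
    intro x
    simp [uPoly]
  -- Step 1 : the polynomial identity whp * v = vp * w
  have hQ : whp * v - vp * w = 0 := by
    have h2s3s : 2 * s ≤ 3 * s := by omega
    refine Polynomial.eq_zero_of_natDegree_lt_card_of_eval_eq_zero _
      (f := fun i : Fin (2 * s) => z (Fin.castLE h2s3s i)) ?_ ?_ ?_
    · intro a b hab
      exact Fin.castLE_injective h2s3s
        (hzinj1 _ _ (by simpa using a.isLt) (by simpa using b.isLt) hab)
    · intro i
      set j : Fin (3 * s) := Fin.castLE h2s3s i with hj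
      have hjlt : (j : ℕ) < 2 * s := by simpa [hj] using i.isLt
      have hzj : z j ^ n = e := hzn1 j hjlt
      have hy1 : y j * vp.eval (z j) = whp.eval (z j) := by
        rw [hy j, div_mul_cancel₀ _ (hvpz1 j hjlt), hup_eval, hzj, hwhp]
        simp
      have hy2 : y j * v.eval (z j) = w.eval (z j) := by
        have := heq j
        rw [hzj] at this
        rw [hwdef]
        simp only [Polynomial.eval_add, Polynomial.eval_mul, Polynomial.eval_C]
        linear_combination this
      simp only [Polynomial.eval_sub, Polynomial.eval_mul]
      calc whp.eval (z j) * v.eval (z j) - vp.eval (z j) * w.eval (z j)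
          = (y j * vp.eval (z j)) * v.eval (z j)
            - vp.eval (z j) * (y j * v.eval (z j)) := by rw [hy1, hy2]
        _ = 0 := by ring
    · rw [Fintype.card_fin]
      calc (whp * v - vp * w).natDegree
          ≤ max (whp * v).natDegree (vp * w).natDegree := Polynomial.natDegree_sub_le _ _
        _ ≤ 2 * s - 1 := by
            refine max_le ?_ ?_
            · refine (Polynomial.natDegree_mul_le).trans ?_
              omega
            · refine (Polynomial.natDegree_mul_le).trans ?_
              omega
        _ < 2 * s := by omega
  -- Step 2 : v vanishes at the roots of vp
  have hv_r : ∀ l, v.eval (r l) = 0 := by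
    intro l
    have h0 : whp.eval (r l) * v.eval (r l) - vp.eval (r l) * w.eval (r l) = 0 := by
      have := congrArg (Polynomial.eval (r l)) hQ
      simpa using this
    rw [hvp_r l, zero_mul, sub_zero] at h0
    exact (mul_eq_zero.mp h0).resolve_left (hwhp_r_ne l)
  -- Step 3 : v = C c * vp
  set c : ℂ := v.coeff s / (∏ l, θp l) with hc
  set D : Polynomial ℂ := v - Polynomial.C c * vp with hD
  have hD_coeff : D.coeff s = 0 := by
    rw [hD]
    simp only [Polynomial.coeff_sub, Polynomial.coeff_C_mul, hvp_coeff, hc]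
    rw [div_mul_cancel₀ _ hprod_ne, sub_self]
  have hD_deg : D.degree < (s : ℕ) := by
    rw [Polynomial.degree_lt_iff_coeff_zero]
    intro m hm
    rcases eq_or_lt_of_le hm with hms | hms
    · have : m = s := by exact_mod_cast hms.symm
      rw [this]; exact hD_coeff
    · have hms' : (s : ℕ) < m := by exact_mod_cast hms
      rw [hD]
      simp only [Polynomial.coeff_sub, Polynomial.coeff_C_mul]
      rw [Polynomial.coeff_eq_zero_of_degree_lt (lt_of_le_of_lt hv (by exact_mod_cast hms')),
        Polynomial.coeff_eq_zero_of_degree_lt (by rw [hvp_deg]; exact_mod_cast hms')]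
      ring
  have hD_zero : D = 0 := by
    by_cases hD0 : D = 0
    · exact hD0
    refine Polynomial.eq_zero_of_natDegree_lt_card_of_eval_eq_zero _ (f := r) hrinj ?_ ?_
    · intro l
      rw [hD]
      simp [hv_r l, hvp_r l]
    · rw [Fintype.card_fin]
      exact (Polynomial.natDegree_lt_iff_degree_lt hD0).mpr hD_deg
  have hveq : v = Polynomial.C c * vp := by
    have := sub_eq_zero.mp hD_zero
    exact this
  -- Step 4 : w = C c * whp
  have hweq : w = Polynomial.C c * whp := by
    have h1 : vp * (Polynomial.C c * whp - w) = 0 := by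
      have : whp * v - vp * w = 0 := hQ
      rw [hveq] at this
      linear_combination this
    rcases mul_eq_zero.mp h1 with h | h
    · exact absurd h hvp_ne
    · exact (sub_eq_zero.mp h).symm
  -- Step 5 : the differences A and B vanish
  set A : Polynomial ℂ := uh - Polynomial.C c * uHat s n θp gp with hA
  set B : Polynomial ℂ := ut - Polynomial.C c * uTilde s θp gp with hB
  have hAB : Polynomial.C e * A + B = 0 := by
    rw [hwdef, hwhp] at hweq
    rw [hA, hB]
    linear_combination hweq
  have hAzero : A = 0 := by
    refine Polynomial.eq_zero_of_natDegree_lt_card_of_eval_eq_zero _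
      (f := fun i : Fin s => z ⟨2 * s + (i : ℕ), by omega⟩) ?_ ?_ ?_
    · intro a b hab
      have h1 := hzinj2 _ _ (by simp) (by simp) hab
      have h2 : 2 * s + (a : ℕ) = 2 * s + (b : ℕ) := congrArg Fin.val h1
      exact Fin.ext (by omega)
    · intro i
      set j : Fin (3 * s) := ⟨2 * s + (i : ℕ), by omega⟩ with hj
      have hjge : 2 * s ≤ (j : ℕ) := by simp [hj]
      have hvpz := hvz2 j hjge
      have h1 : y j * v.eval (z j) = c * (uPoly s n θp gp).eval (z j) := by
        rw [hy j, hveq]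
        simp only [Polynomial.eval_mul, Polynomial.eval_C]
        field_simp
      have h2 := heq j
      rw [h1, hup_eval] at h2
      have hAev : A.eval (z j) = uh.eval (z j) - c * (uHat s n θp gp).eval (z j) := by
        rw [hA]; simp
      have hBev : B.eval (z j) = ut.eval (z j) - c * (uTilde s θp gp).eval (z j) := by
        rw [hB]; simp
      have h4 : z j ^ n * A.eval (z j) + B.eval (z j) = 0 := by
        rw [hAev, hBev]
        linear_combination -h2
      have h5 : e * A.eval (z j) + B.eval (z j) = 0 := by
        have := congrArg (Polynomial.eval (z j)) hAB
        simpa using this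
      have h6 : (z j ^ n - e) * A.eval (z j) = 0 := by linear_combination h4 - h5
      exact (mul_eq_zero.mp h6).resolve_left (sub_ne_zero.mpr (hzn2 j hjge))
    · rw [Fintype.card_fin]
      have : A.natDegree ≤ s - 1 := by
        rw [hA]
        refine (Polynomial.natDegree_sub_le _ _).trans ?_
        exact max_le huh_nd
          ((Polynomial.natDegree_C_mul_le _ _).trans (natDegree_uHat_le s n θp gp))
      omega
  have hBzero : B = 0 := by
    rw [hAzero] at hAB
    simpa using hAB
  exact ⟨c, hveq, sub_eq_zero.mp hAzero, sub_eq_zero.mp hBzero⟩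
end
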